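/- In the general planted partition model with base probability q and intra-cluster edge probabilities exceeding q, the expected cost of any tree T equals q(n³ − n)/3 + cost_H(T), where H is the weighted graph on V with edges only within clusters, of weight Pr(edge) − q. -/

import Mathlib

open Finset

/-- A rooted binary tree whose leaves are labeled by elements of `Fin n`. -/
inductive HTree (n : ℕ) : Type where
  | leaf : Fin n → HTree n
  | node : HTree n → HTree n → HTree n

namespace HTree

variable {n : ℕ}

/-- The list of leaf labels, left to right. -/
def leafList : HTree n → List (Fin n)
  | .leaf v => [v]
  | .node l r => l.leafList ++ r.leafList

/-- The set of leaf labels of a tree. -/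
def leaves (T : HTree n) : Finset (Fin n) := T.leafList.toFinset

/-- `T` is a hierarchical clustering tree of the whole vertex set `Fin n`:
its leaves are in one-to-one correspondence with `Fin n`. -/
def IsFullTree (T : HTree n) : Prop := T.leafList.Nodup ∧ T.leaves = Finset.univ

/-- `|leaves(T[i ∨ j])|`: the number of leaves of the subtree rooted at the
lowest common ancestor of leaves `i` and `j`. -/
def lcaSize : HTree n → Fin n → Fin n → ℕ
  | .leaf _, _, _ => 1
  | .node l r, i, j =>
    if i ∈ l.leaves ∧ j ∈ l.leaves then l.lcaSize i j
    else if i ∈ r.leaves ∧ j ∈ r.leaves then r.lcaSize i j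
    else (l.leaves ∪ r.leaves).card

/-- `cost_G(T) = Σ_{{i,j}} w_{ij} |leaves(T[i ∨ j])|`, the sum being over
unordered pairs (represented as ordered pairs `p.1 < p.2`). -/
def pairCost (w : Fin n → Fin n → ℝ) (T : HTree n) : ℝ :=
  ∑ p ∈ Finset.univ.filter (fun p : Fin n × Fin n => p.1 < p.2),
    w p.1 p.2 * (T.lcaSize p.1 p.2 : ℝ)

/-- `w(A, B)`: total weight of edges between `A` and `B`. -/
def cut (w : Fin n → Fin n → ℝ) (A B : Finset (Fin n)) : ℝ :=
  ∑ i ∈ A, ∑ j ∈ B, w i j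

/-- The sum-of-splits formulation of the cost:
`Σ over internal splits S → (S₁,S₂) of |S| ⬝ w(S₁,S₂)`. -/
def splitCost (w : Fin n → Fin n → ℝ) : HTree n → ℝ
  | .leaf _ => 0
  | .node l r =>
      ((l.leaves ∪ r.leaves).card : ℝ) * cut w l.leaves r.leaves
        + splitCost w l + splitCost w r

/-- `Subtree t T`: `t` occurs as a subtree of `T`. -/
inductive Subtree : HTree n → HTree n → Prop
  | refl (t : HTree n) : Subtree t t
  | left {t l r : HTree n} : Subtree t l → Subtree t (.node l r)
  | right {t l r : HTree n} : Subtree t r → Subtree t (.node l r)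

end HTree

namespace HTree
variable {n : ℕ}

lemma lcaSize_symm' : ∀ (T : HTree n) (i j : Fin n), T.lcaSize i j = T.lcaSize j i
  | .leaf _, _, _ => rfl
  | .node l r, i, j => by
    have hl := lcaSize_symm' l i j
    have hr := lcaSize_symm' r i j
    by_cases h1 : i ∈ l.leaves ∧ j ∈ l.leaves
    · simp [lcaSize, h1.1, h1.2, hl]
    · have h1' : ¬(j ∈ l.leaves ∧ i ∈ l.leaves) := fun h => h1 ⟨h.2, h.1⟩
      by_cases h2 : i ∈ r.leaves ∧ j ∈ r.leaves
      · simp [lcaSize, h1, h1', h2.1, h2.2, hr]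
      · have h2' : ¬(j ∈ r.leaves ∧ i ∈ r.leaves) := fun h => h2 ⟨h.2, h.1⟩
        simp [lcaSize, h1, h1', h2, h2']

lemma leaves_node' (l r : HTree n) : (HTree.node l r).leaves = l.leaves ∪ r.leaves := by
  simp [leaves, leafList]

lemma key_count : ∀ (T : HTree n), T.leafList.Nodup →
    3 * ∑ p ∈ (T.leaves ×ˢ T.leaves).filter (fun p => p.1 ≠ p.2), T.lcaSize p.1 p.2
      + 2 * T.leaves.card = 2 * T.leaves.card ^ 3
  | .leaf v, _ => by
    simp [leaves, leafList, lcaSize, Finset.filter_eq_empty_iff]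
  | .node l r, h => by
    simp only [leafList, List.nodup_append] at h
    obtain ⟨hl, hr, hdisj⟩ := h
    have hd : Disjoint l.leaves r.leaves := by
      rw [Finset.disjoint_left]
      intro a ha hb
      exact hdisj a (by simpa [leaves] using ha) a (by simpa [leaves] using hb) rfl
    have hconv : ∀ (A : Finset (Fin n)) (f : Fin n → Fin n → ℕ),
        ∑ p ∈ (A ×ˢ A).filter (fun p => p.1 ≠ p.2), f p.1 p.2
          = ∑ i ∈ A, ∑ j ∈ A, if i ≠ j then f i j else 0 := by
      intro A f
      rw [Finset.sum_filter, Finset.sum_product]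
    have ihl := key_count l hl
    have ihr := key_count r hr
    rw [hconv] at ihl ihr
    rw [hconv, leaves_node', Finset.card_union_of_disjoint hd]
    rw [Finset.sum_union hd]
    simp only [Finset.sum_union hd, Finset.sum_add_distrib]
    have eLL : ∑ i ∈ l.leaves, ∑ j ∈ l.leaves,
        (if i ≠ j then (l.node r).lcaSize i j else 0)
        = ∑ i ∈ l.leaves, ∑ j ∈ l.leaves, (if i ≠ j then l.lcaSize i j else 0) := by
      refine Finset.sum_congr rfl fun i hi => Finset.sum_congr rfl fun j hj => ?_
      by_cases hij : i = j
      · simp [hij]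
      · simp [hij, lcaSize, hi, hj]
    have eRR : ∑ i ∈ r.leaves, ∑ j ∈ r.leaves,
        (if i ≠ j then (l.node r).lcaSize i j else 0)
        = ∑ i ∈ r.leaves, ∑ j ∈ r.leaves, (if i ≠ j then r.lcaSize i j else 0) := by
      refine Finset.sum_congr rfl fun i hi => Finset.sum_congr rfl fun j hj => ?_
      have hiL : i ∉ l.leaves := Finset.disjoint_right.mp hd hi
      by_cases hij : i = j
      · simp [hij]
      · simp [hij, lcaSize, hi, hj, hiL]
    have eLR : ∑ i ∈ l.leaves, ∑ j ∈ r.leaves,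
        (if i ≠ j then (l.node r).lcaSize i j else 0)
        = l.leaves.card * (r.leaves.card * (l.leaves.card + r.leaves.card)) := by
      have : ∀ i ∈ l.leaves, ∀ j ∈ r.leaves,
          (if i ≠ j then (l.node r).lcaSize i j else 0)
            = (l.leaves.card + r.leaves.card) := by
        intro i hi j hj
        have hij : i ≠ j := fun h => Finset.disjoint_left.mp hd hi (h ▸ hj)
        have hjL : j ∉ l.leaves := Finset.disjoint_right.mp hd hj
        have hiR : i ∉ r.leaves := Finset.disjoint_left.mp hd hi
        simp [hij, lcaSize, hjL, hiR, Finset.card_union_of_disjoint hd]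
      rw [Finset.sum_congr rfl fun i hi => Finset.sum_congr rfl fun j hj => this i hi j hj]
      simp [Finset.sum_const, mul_assoc, mul_comm]
    have eRL : ∑ i ∈ r.leaves, ∑ j ∈ l.leaves,
        (if i ≠ j then (l.node r).lcaSize i j else 0)
        = r.leaves.card * (l.leaves.card * (l.leaves.card + r.leaves.card)) := by
      have : ∀ i ∈ r.leaves, ∀ j ∈ l.leaves,
          (if i ≠ j then (l.node r).lcaSize i j else 0)
            = (l.leaves.card + r.leaves.card) := by
        intro i hi j hj
        have hij : i ≠ j := fun h => Finset.disjoint_right.mp hd hi (h ▸ hj)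
        have hjR : j ∉ r.leaves := Finset.disjoint_left.mp hd hj
        have hiL : i ∉ l.leaves := Finset.disjoint_right.mp hd hi
        simp [hij, lcaSize, hjR, hiL, Finset.card_union_of_disjoint hd]
      rw [Finset.sum_congr rfl fun i hi => Finset.sum_congr rfl fun j hj => this i hi j hj]
      simp [Finset.sum_const, mul_assoc, mul_comm]
    rw [eLL, eRR, eLR, eRL]
    zify at ihl ihr ⊢
    linear_combination ihl + ihr

end HTree


/-- General planted partition model: vertices are clustered by `c`; the edge
probability is `q` across clusters and exceeds `q` within clusters.  The expected
cost of any full tree `T` equals `q(n³ - n)/3 + cost_H(T)`, where `H` carries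
weight `p_{ij} - q` on intra-cluster pairs only. -/
theorem planted_partition_expected_cost (n k : ℕ) (c : Fin n → Fin k) (q : ℝ)
    (p : Fin n → Fin n → ℝ) (hsymm : ∀ i j, p i j = p j i)
    (hcross : ∀ i j, i ≠ j → c i ≠ c j → p i j = q)
    (hintra : ∀ i j, i ≠ j → c i = c j → q < p i j)
    (T : HTree n) (hT : T.IsFullTree) :
    T.pairCost p
      = q * ((n : ℝ) ^ 3 - n) / 3
        + T.pairCost (fun i j => if c i = c j then p i j - q else 0) := by
  obtain ⟨hnodup, huniv⟩ := hT
  have hkey := HTree.key_count T hnodup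
  rw [huniv, Finset.univ_product_univ] at hkey
  have hcard : (Finset.univ : Finset (Fin n)).card = n := by simp
  rw [hcard] at hkey
  set F := Finset.univ.filter (fun p : Fin n × Fin n => p.1 < p.2) with hF
  set G := Finset.univ.filter (fun p : Fin n × Fin n => p.2 < p.1) with hG
  have hunion : (Finset.univ.filter (fun p : Fin n × Fin n => p.1 ≠ p.2)) = F ∪ G := by
    ext x
    simp only [hF, hG, Finset.mem_filter, Finset.mem_union, Finset.mem_univ, true_and]
    exact ne_iff_lt_or_gt
  have hdisj : Disjoint F G := by
    rw [Finset.disjoint_left]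
    intro x hx hx'
    simp only [hF, hG, Finset.mem_filter] at hx hx'
    exact absurd hx'.2 (not_lt.mpr hx.2.le)
  have hswap : ∑ x ∈ G, T.lcaSize x.1 x.2 = ∑ x ∈ F, T.lcaSize x.1 x.2 := by
    refine Finset.sum_nbij' (i := Prod.swap) (j := Prod.swap) ?_ ?_ ?_ ?_ ?_
    · intro a ha
      simp only [hF, hG, Finset.mem_filter, Finset.mem_univ, true_and] at ha ⊢
      exact ha
    · intro a ha
      simp only [hF, hG, Finset.mem_filter, Finset.mem_univ, true_and] at ha ⊢
      exact ha
    · intro a _; rfl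
    · intro a _; rfl
    · intro a _
      exact HTree.lcaSize_symm' T a.1 a.2
  rw [hunion, Finset.sum_union hdisj, hswap] at hkey
  set S := ∑ x ∈ F, T.lcaSize x.1 x.2 with hS
  have hSreal : (S : ℝ) = ((n : ℝ) ^ 3 - n) / 3 := by
    have hcast : (3 : ℝ) * (S + S) + 2 * n = 2 * n ^ 3 := by exact_mod_cast hkey
    linarith
  have hdec : ∀ x ∈ F, p x.1 x.2 * (T.lcaSize x.1 x.2 : ℝ)
      = q * (T.lcaSize x.1 x.2 : ℝ)
        + (if c x.1 = c x.2 then p x.1 x.2 - q else 0) * (T.lcaSize x.1 x.2 : ℝ) := by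
    intro x hx
    have hne : x.1 ≠ x.2 := (Finset.mem_filter.mp hx).2.ne
    by_cases hc : c x.1 = c x.2
    · rw [if_pos hc]; ring
    · rw [if_neg hc, hcross _ _ hne hc]; ring
  calc T.pairCost p
      = ∑ x ∈ F, (q * (T.lcaSize x.1 x.2 : ℝ)
          + (if c x.1 = c x.2 then p x.1 x.2 - q else 0) * (T.lcaSize x.1 x.2 : ℝ)) :=
        Finset.sum_congr rfl hdec
    _ = q * ∑ x ∈ F, (T.lcaSize x.1 x.2 : ℝ)
          + T.pairCost (fun i j => if c i = c j then p i j - q else 0) := by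
        rw [Finset.sum_add_distrib, Finset.mul_sum]
        rfl
    _ = q * ((n : ℝ) ^ 3 - n) / 3
          + T.pairCost (fun i j => if c i = c j then p i j - q else 0) := by
        have : ∑ x ∈ F, (T.lcaSize x.1 x.2 : ℝ) = (S : ℝ) := by
          rw [hS]; push_cast; rfl
        rw [this, hSreal]; ring
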